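/- For every real a > 0 there exists a constant C > 0 such that |a_n^{(r)} − 2(n + k)·t_∞^{(r)}| ≤ C·a^n for all n ≥ 1; in particular, a_n^{(r)}/n converges to 2·t_∞^{(r)} as n → ∞, so the limiting density D(k, r) = (r + 1)·lim_{n→∞} a_n^{(r)}/n exists and equals 2(r + 1)·t_∞^{(r)}. -/

import Mathlib

open Finset Filter Topology

set_option maxHeartbeats 2000000 in
/-- Rényi parking, discrete model: for every `c > 0` there is `C > 0` with
`|a n - 2(n+k)·t_∞| ≤ C·cⁿ` for all `n ≥ 1`; in particular `a n / n → 2·t_∞`,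
so the limiting density `D(k,r) = (r+1)·lim a n / n` exists and equals
`2(r+1)·t_∞`. -/
theorem parking_density_exists
    (k r : ℕ) (hk : 1 ≤ k) (hkr : k ≤ r) (hrk : r ≤ 2 * k)
    (a s t u : ℕ → ℝ)
    (ha_init : ∀ n : ℕ, 1 ≤ n → n ≤ k + 1 →
      a n = if n = r - k + 1 then 1 else 0)
    (ha_rec : ∀ n : ℕ, k + 2 ≤ n →
      a n = 2 / ((n : ℝ) - k - 1) * ∑ i ∈ Finset.Icc 1 (n - k - 1), a i)
    (hs : ∀ n : ℕ, s n = ∑ i ∈ Finset.Icc 1 n, a i)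
    (ht : ∀ n : ℕ, t n = s n / ((n : ℝ) * ((n : ℝ) + 2 * k + 1)))
    (hu : ∀ n : ℕ, 2 ≤ n → u n = t n - t (n - 1))
    (tinf : ℝ) (htinf : Filter.Tendsto t Filter.atTop (𝓝 tinf)) :
    (∀ c : ℝ, 0 < c → ∃ C : ℝ, 0 < C ∧
      ∀ n : ℕ, 1 ≤ n → |a n - 2 * ((n : ℝ) + k) * tinf| ≤ C * c ^ n) ∧
    Filter.Tendsto (fun n : ℕ => a n / (n : ℝ)) Filter.atTop (𝓝 (2 * tinf)) ∧
    Filter.Tendsto (fun n : ℕ => ((r : ℝ) + 1) * (a n / (n : ℝ)))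
      Filter.atTop (𝓝 (2 * ((r : ℝ) + 1) * tinf)) := by
  have hkR : (1:ℝ) ≤ (k:ℝ) := by exact_mod_cast hk
  -- s in terms of t
  have hst : ∀ m : ℕ, 1 ≤ m → s m = (m:ℝ) * ((m:ℝ) + 2*k + 1) * t m := by
    intro m hm
    have hm0 : (0:ℝ) < (m:ℝ) := by exact_mod_cast hm
    have hd : (m:ℝ) * ((m:ℝ) + 2*k+1) ≠ 0 := by positivity
    rw [ht m]; field_simp
  -- s recursion
  have hsrec : ∀ n : ℕ, s (n+1) = s n + a (n+1) := by
    intro n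
    rw [hs, hs, Finset.sum_Icc_succ_top (Nat.le_add_left 1 n)]
  -- a in terms of t
  have haL : ∀ n : ℕ, k + 2 ≤ n → a n = 2 * ((n:ℝ) + k) * t (n - k - 1) := by
    intro n hn
    have hm : 1 ≤ n - k - 1 := by omega
    have hcast : ((n - k - 1 : ℕ) : ℝ) = (n:ℝ) - (k:ℝ) - 1 := by
      have h1 : n - k - 1 = n - (k+1) := by omega
      rw [h1, Nat.cast_sub (by omega)]; push_cast; ring
    have hne : (n:ℝ) - (k:ℝ) - 1 ≠ 0 := by
      have : (0:ℝ) < ((n - k - 1 : ℕ) : ℝ) := by exact_mod_cast hm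
      rw [hcast] at this; linarith
    rw [ha_rec n hn, ← hs (n-k-1), hst (n-k-1) hm, hcast]
    field_simp
    ring
  -- the key recurrence for u
  have huL : ∀ n : ℕ, k + 2 ≤ n →
      ((n:ℝ) * ((n:ℝ) + 2*k + 1)) * u n
        = 2 * ((n:ℝ) + k) * (t (n-k-1) - t (n-1)) := by
    intro n hn
    have h2 : 2 ≤ n := by omega
    have hn1 : 1 ≤ n - 1 := by omega
    have hrec : s n = s (n-1) + a n := by
      have h := hsrec (n-1)
      rwa [Nat.sub_add_cancel (by omega : 1 ≤ n)] at h
    have e1 := hst n (by omega)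
    have e2 := hst (n-1) hn1
    have hcast1 : ((n-1:ℕ):ℝ) = (n:ℝ) - 1 := by
      rw [Nat.cast_sub (by omega)]; norm_num
    rw [hcast1] at e2
    have e3 := haL n hn
    rw [hu n h2]
    linear_combination (-1) * e1 + hrec + e2 + e3
  -- telescoping
  have htel : ∀ n : ℕ, k + 2 ≤ n →
      t (n-1) - t (n-k-1) = ∑ i ∈ Finset.range k, u (n-k+i) := by
    intro n hn
    have h := Finset.sum_range_sub (fun i => t (n-k-1+i)) k
    rw [show n-k-1+k = n-1 by omega] at h
    simp only [show n-k-1+0 = n-k-1 by omega] at h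
    rw [← h]
    apply Finset.sum_congr rfl
    intro i _
    rw [hu (n-k+i) (by omega)]
    have e1 : n-k-1+(i+1) = n-k+i := by omega
    have e2 : n-k-1+i = n-k+i-1 := by omega
    rw [e1, e2]
  -- superexponential decay of u
  have hudecay : ∀ q : ℝ, 0 < q → q < 1 →
      ∃ C : ℝ, 0 < C ∧ ∀ n : ℕ, 2 ≤ n → |u n| ≤ C * q ^ n := by
    intro q hq0 hq1
    obtain ⟨N₀, hN₀⟩ := exists_nat_ge (2 * (k:ℝ) / q ^ k)
    set N := max N₀ (k + 2) with hN
    set C := 1 + ∑ j ∈ Finset.Icc 2 N, |u j| / q ^ j with hCdef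
    have hsum0 : 0 ≤ ∑ j ∈ Finset.Icc 2 N, |u j| / q ^ j :=
      Finset.sum_nonneg (fun j _ => by positivity)
    have hCpos : 0 < C := by rw [hCdef]; linarith
    refine ⟨C, hCpos, ?_⟩
    intro n
    induction n using Nat.strong_induction_on with
    | _ n ih =>
      intro hn2
      by_cases hsmall : n ≤ N
      · have hmem : n ∈ Finset.Icc 2 N := Finset.mem_Icc.mpr ⟨hn2, hsmall⟩
        have h1 : |u n| / q ^ n ≤ C := by
          have h := Finset.single_le_sum (f := fun j => |u j| / q ^ j)
            (fun j _ => by positivity) hmem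
          rw [hCdef]; linarith
        have hqn : (0:ℝ) < q ^ n := pow_pos hq0 n
        calc |u n| = (|u n| / q^n) * q^n := by field_simp
        _ ≤ C * q^n := mul_le_mul_of_nonneg_right h1 hqn.le
      · push_neg at hsmall
        have hnk : k + 2 ≤ n := by omega
        have hnN0 : N₀ ≤ n := by omega
        have hrecn := huL n hnk
        have hteln := htel n hnk
        have hnR : (0:ℝ) < (n:ℝ) := by
          exact_mod_cast (by omega : 0 < n)
        have hD : (0:ℝ) < (n:ℝ) * ((n:ℝ)+2*k+1) := by positivity
        have h2nk : (0:ℝ) < 2*((n:ℝ)+k) := by positivity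
        -- bound the telescoped sum
        have hb1 : |t (n-1) - t (n-k-1)| ≤ (k:ℝ) * (C * q ^ (n - k)) := by
          rw [hteln]
          calc |∑ i ∈ Finset.range k, u (n-k+i)|
              ≤ ∑ i ∈ Finset.range k, |u (n-k+i)| :=
                Finset.abs_sum_le_sum_abs _ _
          _ ≤ ∑ _i ∈ Finset.range k, C * q ^ (n-k) := by
              apply Finset.sum_le_sum
              intro i hi
              have hik : i < k := Finset.mem_range.mp hi
              have h1 : |u (n-k+i)| ≤ C * q ^ (n-k+i) :=
                ih (n-k+i) (by omega) (by omega)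
              have h2 : q ^ (n-k+i) ≤ q ^ (n-k) :=
                pow_le_pow_of_le_one hq0.le hq1.le (by omega)
              calc |u (n-k+i)| ≤ C * q ^ (n-k+i) := h1
              _ ≤ C * q ^ (n-k) := mul_le_mul_of_nonneg_left h2 hCpos.le
          _ = (k:ℝ) * (C * q ^ (n-k)) := by
              rw [Finset.sum_const, Finset.card_range, nsmul_eq_mul]
        -- take absolute values in the recurrence
        have habs : ((n:ℝ) * ((n:ℝ)+2*k+1)) * |u n|
            = 2*((n:ℝ)+k) * |t (n-k-1) - t (n-1)| := by
          rw [← abs_of_pos hD, ← abs_mul, hrecn, abs_mul, abs_of_pos h2nk]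
        -- n q^k ≥ 2k
        have hnq : 2*(k:ℝ) ≤ (n:ℝ) * q ^ k := by
          have h1 : 2*(k:ℝ)/q^k ≤ (N₀:ℝ) := hN₀
          have h2 : (N₀:ℝ) ≤ (n:ℝ) := by exact_mod_cast hnN0
          have hqk : (0:ℝ) < q ^ k := pow_pos hq0 k
          rw [div_le_iff₀ hqk] at h1
          nlinarith
        have hsplit : q ^ n = q ^ (n-k) * q ^ k := by
          rw [← pow_add]; congr 1; omega
        have hqnk : (0:ℝ) < q ^ (n-k) := pow_pos hq0 _
        have hqk : (0:ℝ) < q ^ k := pow_pos hq0 k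
        have base : 2*((n:ℝ)+k)*(k:ℝ) ≤ (n:ℝ)*((n:ℝ)+2*k+1) * q^k := by
          have h3 : 2*(k:ℝ) * ((n:ℝ)+2*k+1) ≤ ((n:ℝ) * q^k) * ((n:ℝ)+2*k+1) := by
            apply mul_le_mul_of_nonneg_right hnq (by positivity)
          nlinarith
        have hfinal : 2*((n:ℝ)+k) * ((k:ℝ) * (C * q ^ (n-k)))
            ≤ ((n:ℝ)*((n:ℝ)+2*k+1)) * (C * q ^ n) := by
          rw [hsplit]
          calc 2*((n:ℝ)+k) * ((k:ℝ) * (C * q ^ (n-k)))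
              = (2*((n:ℝ)+k)*(k:ℝ)) * (C * q^(n-k)) := by ring
          _ ≤ ((n:ℝ)*((n:ℝ)+2*k+1) * q^k) * (C * q^(n-k)) :=
              mul_le_mul_of_nonneg_right base (by positivity)
          _ = ((n:ℝ)*((n:ℝ)+2*k+1)) * (C * (q^(n-k) * q^k)) := by ring
        have h5 : ((n:ℝ)*((n:ℝ)+2*k+1)) * |u n|
            ≤ ((n:ℝ)*((n:ℝ)+2*k+1)) * (C * q ^ n) := by
          rw [habs]
          calc 2*((n:ℝ)+k) * |t (n-k-1) - t (n-1)|
              ≤ 2*((n:ℝ)+k) * ((k:ℝ) * (C * q ^ (n-k))) := by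
                apply mul_le_mul_of_nonneg_left _ h2nk.le
                rw [abs_sub_comm]; exact hb1
          _ ≤ _ := hfinal
        exact le_of_mul_le_mul_left h5 hD
  -- tail bound for t
  have httail : ∀ q : ℝ, 0 < q → q < 1 →
      ∃ C : ℝ, 0 < C ∧ ∀ n : ℕ, 1 ≤ n → |t n - tinf| ≤ C * q ^ n := by
    intro q hq0 hq1
    obtain ⟨C, hCpos, hC⟩ := hudecay q hq0 hq1
    have h1q : (0:ℝ) < 1 - q := by linarith
    refine ⟨C / (1 - q) + 1, by positivity, ?_⟩
    intro n hn
    have hlim : Tendsto (fun m => |t n - t m|) atTop (𝓝 |t n - tinf|) :=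
      (tendsto_const_nhds.sub htinf).abs
    apply le_of_tendsto hlim
    filter_upwards [eventually_ge_atTop n] with m hm
    have htel2 : t m - t n = ∑ i ∈ Finset.range (m - n), u (n + i + 1) := by
      have h := Finset.sum_range_sub (fun i => t (n + i)) (m - n)
      rw [show n + (m-n) = m by omega] at h
      simp only [Nat.add_zero] at h
      rw [← h]
      apply Finset.sum_congr rfl
      intro i _
      rw [hu (n+i+1) (by omega)]
      have e1 : n+(i+1) = n+i+1 := by omega
      have e2 : n+i = n+i+1-1 := by omega
      rw [e1, ← e2]
    have hg : ∑ i ∈ Finset.range (m-n), q^i ≤ 1/(1-q) := by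
      have hgm := geom_sum_mul q (m-n)
      have h2 : (∑ i ∈ Finset.range (m-n), q^i) * (1-q) = 1 - q^(m-n) := by
        linear_combination -hgm
      rw [le_div_iff₀ h1q, h2]
      have := pow_nonneg hq0.le (m-n)
      linarith
    have hsum : ∑ i ∈ Finset.range (m-n), |u (n+i+1)| ≤ C * q^n * (1/(1-q)) := by
      calc ∑ i ∈ Finset.range (m-n), |u (n+i+1)|
          ≤ ∑ i ∈ Finset.range (m-n), C * q^n * q^i := by
            apply Finset.sum_le_sum
            intro i _
            have h1 := hC (n+i+1) (by omega)
            have h2 : q^(n+i+1) ≤ q^n * q^i := by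
              have : q^(n+i+1) = q^n * q^i * q := by rw [← pow_add, ← pow_succ]
              rw [this]
              have hp : (0:ℝ) < q^n * q^i := by positivity
              nlinarith
            calc |u (n+i+1)| ≤ C * q^(n+i+1) := h1
            _ ≤ C * (q^n * q^i) := mul_le_mul_of_nonneg_left h2 hCpos.le
            _ = C * q^n * q^i := by ring
      _ = C * q^n * ∑ i ∈ Finset.range (m-n), q^i := by rw [← Finset.mul_sum]
      _ ≤ C * q^n * (1/(1-q)) := by
            apply mul_le_mul_of_nonneg_left hg (by positivity)
    have hqn : (0:ℝ) < q ^ n := pow_pos hq0 n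
    calc |t n - t m| = |t m - t n| := abs_sub_comm _ _
    _ ≤ ∑ i ∈ Finset.range (m-n), |u (n+i+1)| := by
        rw [htel2]; exact Finset.abs_sum_le_sum_abs _ _
    _ ≤ C * q^n * (1/(1-q)) := hsum
    _ = C/(1-q) * q^n := by ring
    _ ≤ (C/(1-q) + 1) * q^n := by nlinarith
  -- Part 1
  have part1 : ∀ c : ℝ, 0 < c → ∃ C : ℝ, 0 < C ∧
      ∀ n : ℕ, 1 ≤ n → |a n - 2 * ((n : ℝ) + k) * tinf| ≤ C * c ^ n := by
    intro c hc
    set c' := min c (1/2) with hc'def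
    have hc'0 : 0 < c' := lt_min hc (by norm_num)
    have hc'1 : c' < 1 := lt_of_le_of_lt (min_le_right _ _) (by norm_num)
    have hc'c : c' ≤ c := min_le_left _ _
    set q := c'/2 with hqdef
    have hq0 : 0 < q := by positivity
    have hq1 : q < 1 := by rw [hqdef]; linarith
    obtain ⟨C, hCpos, hC⟩ := httail q hq0 hq1
    have hck : (0:ℝ) < c'^(k+1) := pow_pos hc'0 _
    set B := 1 + (4*(k:ℝ)+4)*|tinf| with hBdef
    have hBpos : 0 < B := by
      have : 0 ≤ (4*(k:ℝ)+4)*|tinf| := by positivity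
      rw [hBdef]; linarith
    set K := (4*(k:ℝ)+4) * C / c'^(k+1) + B / c'^(k+1) + 1 with hKdef
    have hKpos : 0 < K := by
      have h1 : 0 ≤ (4*(k:ℝ)+4) * C / c'^(k+1) := by positivity
      have h2 : 0 ≤ B / c'^(k+1) := by positivity
      rw [hKdef]; linarith
    refine ⟨K, hKpos, ?_⟩
    intro n hn
    have hc'n : (0:ℝ) < c'^n := pow_pos hc'0 n
    have hbound : |a n - 2 * ((n : ℝ) + k) * tinf| ≤ K * c' ^ n := by
      by_cases hcase : n ≤ k + 1
      · -- small n : a n ∈ {0,1}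
        have han : |a n| ≤ 1 := by
          rw [ha_init n hn hcase]
          split <;> norm_num
        have hnk1 : (n:ℝ) ≤ (k:ℝ) + 1 := by exact_mod_cast hcase
        have habs : |a n - 2 * ((n : ℝ) + k) * tinf| ≤ B := by
          have h1 : |a n - 2 * ((n : ℝ) + k) * tinf|
              ≤ |a n| + |2 * ((n : ℝ) + k) * tinf| := abs_sub _ _
          have h2 : |2 * ((n : ℝ) + k) * tinf| = 2 * ((n : ℝ) + k) * |tinf| := by
            rw [abs_mul, abs_of_pos]
            have hn0 : (0:ℝ) < (n:ℝ) := by exact_mod_cast hn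
            positivity
          have h3 : 2 * ((n : ℝ) + k) * |tinf| ≤ (4*(k:ℝ)+4) * |tinf| := by
            have := abs_nonneg tinf
            nlinarith
          rw [hBdef]; rw [h2] at h1; linarith
        have hpow : c'^(k+1) ≤ c'^n := pow_le_pow_of_le_one hc'0.le hc'1.le hcase
        calc |a n - 2 * ((n : ℝ) + k) * tinf| ≤ B := habs
        _ = (B / c'^(k+1)) * c'^(k+1) := by field_simp
        _ ≤ (B / c'^(k+1)) * c'^n := by
            apply mul_le_mul_of_nonneg_left hpow (by positivity)
        _ ≤ K * c'^n := by
            apply mul_le_mul_of_nonneg_right _ hc'n.le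
            rw [hKdef]
            have h1 : 0 ≤ (4*(k:ℝ)+4) * C / c'^(k+1) := by positivity
            linarith
      · push_neg at hcase
        have hnk : k + 2 ≤ n := by omega
        have hm1 : 1 ≤ n - k - 1 := by omega
        set m := n - k - 1 with hmdef
        have hcast : ((m:ℕ):ℝ) = (n:ℝ) - (k:ℝ) - 1 := by
          rw [hmdef, show n - k - 1 = n - (k+1) by omega, Nat.cast_sub (by omega)]
          push_cast; ring
        have e := haL n hnk
        have hdiff : a n - 2*((n:ℝ)+k)*tinf = 2*((n:ℝ)+k)*(t m - tinf) := by
          rw [e]; ring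
        have hn0 : (0:ℝ) < (n:ℝ) := by exact_mod_cast hn
        have h2nk : (0:ℝ) < 2*((n:ℝ)+k) := by positivity
        rw [hdiff, abs_mul, abs_of_pos h2nk]
        have h1 : |t m - tinf| ≤ C * q ^ m := hC m hm1
        have hsplit : c' ^ n = c' ^ m * c' ^ (k+1) := by
          rw [← pow_add]; congr 1; omega
        have hqm : q ^ m = c'^m / 2^m := by rw [hqdef, div_pow]
        have h2m : ((m:ℕ):ℝ) ≤ 2 ^ m := by
          exact_mod_cast (Nat.lt_two_pow_self (n := m)).le
        have hmR1 : (1:ℝ) ≤ ((m:ℕ):ℝ) := by exact_mod_cast hm1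
        have h2mpos : (0:ℝ) < (2:ℝ)^m := by positivity
        have hc'm : (0:ℝ) < c'^m := pow_pos hc'0 m
        -- coefficient bound : 2(n+k)/2^m ≤ 4k+4
        have hcoef : 2*((n:ℝ)+k) / 2^m ≤ 4*(k:ℝ)+4 := by
          rw [div_le_iff₀ h2mpos]
          have hnm : (n:ℝ) + k = ((m:ℕ):ℝ) + 2*k + 1 := by rw [hcast]; ring
          rw [hnm]
          nlinarith [mul_le_mul_of_nonneg_left h2m (by positivity : (0:ℝ) ≤ 4*(k:ℝ)+4)]
        calc 2*((n:ℝ)+k) * |t m - tinf|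
            ≤ 2*((n:ℝ)+k) * (C * q ^ m) := mul_le_mul_of_nonneg_left h1 h2nk.le
        _ = (2*((n:ℝ)+k)/2^m) * (C * c'^m) := by rw [hqm]; field_simp
        _ ≤ (4*(k:ℝ)+4) * (C * c'^m) :=
            mul_le_mul_of_nonneg_right hcoef (by positivity)
        _ = ((4*(k:ℝ)+4) * C / c'^(k+1)) * c'^n := by
            rw [hsplit]; field_simp
        _ ≤ K * c'^n := by
            apply mul_le_mul_of_nonneg_right _ hc'n.le
            rw [hKdef]
            have h2 : 0 ≤ B / c'^(k+1) := by positivity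
            linarith
    calc |a n - 2 * ((n : ℝ) + k) * tinf| ≤ K * c' ^ n := hbound
    _ ≤ K * c ^ n := by
        apply mul_le_mul_of_nonneg_left _ hKpos.le
        exact pow_le_pow_left₀ hc'0.le hc'c n
  -- Part 2
  have part2 : Filter.Tendsto (fun n : ℕ => a n / (n : ℝ)) Filter.atTop (𝓝 (2 * tinf)) := by
    obtain ⟨C, hCpos, hC⟩ := part1 (1/2) (by norm_num)
    have h0 : Tendsto (fun n : ℕ => a n / (n:ℝ) - 2*tinf) atTop (𝓝 0) := by
      apply squeeze_zero_norm' (a := fun n : ℕ => (C + 2*(k:ℝ)*|tinf|)/(n:ℝ))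
      · filter_upwards [eventually_ge_atTop 1] with n hn
        have hnR : (0:ℝ) < (n:ℝ) := by exact_mod_cast hn
        have h1 := hC n hn
        have h2 : ((1:ℝ)/2)^n ≤ 1 := pow_le_one₀ (by norm_num) (by norm_num)
        have hC2 : C * (1/2:ℝ)^n ≤ C := by nlinarith
        have hsplitd : a n / (n:ℝ) - 2*tinf
            = (a n - 2*((n:ℝ)+k)*tinf)/(n:ℝ) + 2*(k:ℝ)*tinf/(n:ℝ) := by
          field_simp
          ring
        rw [Real.norm_eq_abs, hsplitd]
        calc |(a n - 2*((n:ℝ)+k)*tinf)/(n:ℝ) + 2*(k:ℝ)*tinf/(n:ℝ)|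
            ≤ |(a n - 2*((n:ℝ)+k)*tinf)/(n:ℝ)| + |2*(k:ℝ)*tinf/(n:ℝ)| := abs_add_le _ _
        _ = |a n - 2*((n:ℝ)+k)*tinf|/(n:ℝ) + 2*(k:ℝ)*|tinf|/(n:ℝ) := by
            rw [abs_div, abs_div, abs_of_pos hnR, abs_mul, abs_mul]
            norm_num
        _ ≤ C/(n:ℝ) + 2*(k:ℝ)*|tinf|/(n:ℝ) := by
            have : |a n - 2*((n:ℝ)+k)*tinf|/(n:ℝ) ≤ C/(n:ℝ) := by
              gcongr
              linarith
            linarith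
        _ = (C + 2*(k:ℝ)*|tinf|)/(n:ℝ) := by ring
      · exact tendsto_const_div_atTop_nhds_zero_nat _
    have h1 := h0.add_const (2*tinf)
    simpa using h1
  refine ⟨part1, part2, ?_⟩
  have h : 2 * ((r:ℝ)+1) * tinf = ((r:ℝ)+1) * (2 * tinf) := by ring
  rw [h]
  exact part2.const_mul _
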